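/- Let G be a simple graph with nonzero adjacency eigenvalue μ and eigenvector x (so that for every vertex v, the sum of x over the neighbors of v equals μ x_v). Fix integers k ≥ 3 and 1 ≤ s ≤ k/2 with μ > 0 and x positive. Define y on the vertex set of the generalized power hypergraph G^{k,s} by y_w = x_v^{2/k} if w lies in the set V_v associated to an original vertex v, and y_w = (μ^{-1} x_u x_v)^{1/k} if w lies in the set V_e associated to an edge e = {u,v}. Then for every vertex w of G^{k,s}, the sum over edges of G^{k,s} containing w of the product of y over the other k-1 vertices of that edge equals μ^{2s/k} · y_w^{k-1}. -/

import Mathlib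

open Finset

/-- The vertex set of the generalized power hypergraph `G^{k,s}`:
for each vertex `v` of `G` a set `V_v` of `s` new vertices, and for each
edge `e` of `G` a set `V_e` of `k - 2s` new vertices. -/
def PowerVert {V : Type*} (G : SimpleGraph V) (k s : ℕ) : Type _ :=
  (V × Fin s) ⊕ (G.edgeSet × Fin (k - 2 * s))

noncomputable instance {V : Type*} [Fintype V] [DecidableEq V]
    (G : SimpleGraph V) [DecidableRel G.Adj] (k s : ℕ) :
    Fintype (PowerVert G k s) := by
  unfold PowerVert
  classical
  infer_instance

instance {V : Type*} [DecidableEq V] (G : SimpleGraph V) (k s : ℕ) :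
    DecidableEq (PowerVert G k s) := by
  unfold PowerVert; infer_instance

/-- The hyperedge `V_u ∪ V_v ∪ V_e` of `G^{k,s}` corresponding to the
edge `e = {u,v}` of `G`. -/
noncomputable def powerEdge {V : Type*} [Fintype V] [DecidableEq V]
    (G : SimpleGraph V) [DecidableRel G.Adj] (k s : ℕ) (e : G.edgeSet) :
    Finset (PowerVert G k s) := by
  classical
  exact Finset.univ.filter
    (fun w => Sum.elim (fun p => p.1 ∈ (e : Sym2 V)) (fun q => q.1 = e) w)

/-- The eigenvector `y` on `G^{k,s}` built from an eigenvector `x` of `A(G)`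
with eigenvalue `μ`:  `y_w = x_v^{2/k}` for `w ∈ V_v`, and
`y_w = (μ⁻¹ x_u x_v)^{1/k}` for `w ∈ V_e`, `e = {u,v}`. -/
noncomputable def powerVec {V : Type*} (G : SimpleGraph V) (k s : ℕ)
    (μ : ℝ) (x : V → ℝ) : PowerVert G k s → ℝ :=
  Sum.elim (fun p => x p.1 ^ ((2 : ℝ) / k))
    (fun q => (μ⁻¹ * Sym2.lift ⟨fun a b => x a * x b,
        fun a b => mul_comm _ _⟩ (q.1 : Sym2 V)) ^ ((1 : ℝ) / k))

section
variable {V : Type*} [Fintype V] [DecidableEq V]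
  (G : SimpleGraph V) [DecidableRel G.Adj]

lemma lift_pos {x : V → ℝ} (hx : ∀ v, 0 < x v) (z : Sym2 V) :
    0 < Sym2.lift ⟨fun a b => x a * x b, fun a b => mul_comm _ _⟩ z := by
  induction z using Sym2.ind with
  | _ u v => simpa using mul_pos (hx u) (hx v)

lemma powerVec_pos {k s : ℕ} {μ : ℝ} (hμ : 0 < μ) {x : V → ℝ}
    (hx : ∀ v, 0 < x v) (w : PowerVert G k s) : 0 < powerVec G k s μ x w := by
  cases w with
  | inl p => exact Real.rpow_pos_of_pos (hx p.1) _
  | inr q => exact Real.rpow_pos_of_pos (mul_pos (inv_pos.2 hμ) (lift_pos hx _)) _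

lemma mem_powerEdge (k s : ℕ) (e : G.edgeSet) (w : PowerVert G k s) :
    w ∈ powerEdge G k s e ↔ Sum.elim (fun p => p.1 ∈ (e : Sym2 V)) (fun q => q.1 = e) w := by
  unfold powerEdge
  classical
  exact Finset.mem_filter.trans (and_iff_right (Finset.mem_univ _))

lemma prod_powerEdge (k s : ℕ) (hs2 : 2 * s ≤ k) (hk : 0 < k)
    {μ : ℝ} (hμ : 0 < μ) {x : V → ℝ} (hx : ∀ v, 0 < x v) (e : G.edgeSet) :
    ∏ t ∈ powerEdge G k s e, powerVec G k s μ x t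
      = μ ^ ((2 * (s : ℝ) - k) / k)
        * Sym2.lift ⟨fun a b => x a * x b, fun a b => mul_comm _ _⟩ (e : Sym2 V) := by
  obtain ⟨z, hz⟩ := e
  induction z using Sym2.ind with
  | _ u v =>
  have hadj : G.Adj u v := hz
  have hne : u ≠ v := hadj.ne
  simp only [powerEdge, Finset.prod_filter, Fintype.prod_sum_type, Sum.elim_inl,
    Sum.elim_inr, powerVec]
  erw [Finset.prod_filter]
  refine Eq.trans (Fintype.prod_sum_type _) ?_
  simp only [Sum.elim_inl, Sum.elim_inr]
  rw [Fintype.prod_prod_type, Fintype.prod_prod_type]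
  suffices hclean : ((∏ a : V, ∏ _b : Fin s, if a ∈ s(u,v) then x a ^ ((2:ℝ)/k) else 1) *
      ∏ a : G.edgeSet, ∏ _b : Fin (k - 2*s), if a = ⟨s(u,v), hz⟩ then
        (μ⁻¹ * Sym2.lift ⟨fun a b => x a * x b, fun a b => mul_comm _ _⟩ (a : Sym2 V)) ^ ((1:ℝ)/k)
        else 1)
      = μ ^ ((2 * (s : ℝ) - k) / k)
        * Sym2.lift ⟨fun a b => x a * x b, fun a b => mul_comm _ _⟩ s(u,v) by
    convert hclean <;> congr 1
  simp only [Finset.prod_const, Finset.card_univ, Fintype.card_fin,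
    apply_ite (fun t : ℝ => t ^ s), apply_ite (fun t : ℝ => t ^ (k - 2 * s)), one_pow]
  rw [Finset.prod_ite_eq' Finset.univ (⟨s(u,v), hz⟩ : G.edgeSet)]
  have h1 : (Finset.univ.filter (fun a : V => a ∈ s(u,v))) = {u, v} := by
    ext a; simp [Sym2.mem_iff]
  rw [← Finset.prod_filter, h1, Finset.prod_pair hne]
  simp only [Finset.mem_univ, if_true, Sym2.lift_mk]
  have hu := hx u; have hv := hx v
  have hA : (0:ℝ) < x u * x v := mul_pos hu hv
  have hB : (0:ℝ) < μ⁻¹ * (x u * x v) := by positivity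
  rw [← Real.rpow_natCast (x u ^ ((2:ℝ)/k)) s, ← Real.rpow_natCast (x v ^ ((2:ℝ)/k)) s,
    ← Real.rpow_natCast ((μ⁻¹ * (x u * x v)) ^ ((1:ℝ)/k)) (k - 2*s),
    ← Real.rpow_mul hu.le, ← Real.rpow_mul hv.le, ← Real.rpow_mul hB.le,
    ← Real.mul_rpow hu.le hv.le,
    Real.mul_rpow (inv_nonneg.2 hμ.le) hA.le,
    Real.inv_rpow hμ.le, ← Real.rpow_neg hμ.le,
    Nat.cast_sub hs2]
  push_cast
  rw [show ∀ p q m : ℝ, p * (m * q) = m * (p * q) from fun p q m => by ring,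
    ← Real.rpow_add hA]
  have hkR : (0:ℝ) < k := by exact_mod_cast hk
  rw [show (2:ℝ)/k*s + 1/k*((k:ℝ) - 2*s) = 1 from by field_simp; ring, Real.rpow_one]
  congr 1
  field_simp
  ring_nf

lemma sum_incident (x : V → ℝ) (v : V) :
    ∑ e ∈ Finset.univ.filter (fun e : G.edgeSet => v ∈ (e : Sym2 V)),
        Sym2.lift ⟨fun a b => x a * x b, fun a b => mul_comm _ _⟩ (e : Sym2 V)
      = ∑ u ∈ G.neighborFinset v, x v * x u := by
  refine Finset.sum_bij' (fun e he => Sym2.Mem.other' (Finset.mem_filter.1 he).2)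
    (fun u hu => ⟨s(v,u), by simpa using (SimpleGraph.mem_neighborFinset ..).1 hu⟩)
    ?_ ?_ ?_ ?_ ?_
  · intro e he
    rw [SimpleGraph.mem_neighborFinset, ← SimpleGraph.mem_edgeSet,
      Sym2.other_spec' (Finset.mem_filter.1 he).2]
    exact e.2
  · intro u hu
    simp
  · intro e he
    exact Subtype.ext (Sym2.other_spec' (Finset.mem_filter.1 he).2)
  · intro u hu
    exact Sym2.congr_right.1 (Sym2.other_spec' _)
  · intro e he
    have h := (Finset.mem_filter.1 he).2
    have h2 := Sym2.other_spec' h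
    conv_lhs => rw [← h2]
    simp only [Sym2.lift_mk]
end

/-- `y` is an eigenvector of the adjacency tensor of `G^{k,s}` with
eigenvalue `μ^{2s/k}`: at every vertex `w` of `G^{k,s}`, the sum over the
hyperedges containing `w` of the product of `y` over the other `k - 1`
vertices equals `μ^{2s/k} · y_w^{k-1}`. -/
theorem powerVec_is_eigenvector {V : Type*} [Fintype V] [DecidableEq V]
    (G : SimpleGraph V) [DecidableRel G.Adj]
    (k s : ℕ) (hk : 3 ≤ k) (hs1 : 1 ≤ s) (hs2 : 2 * s ≤ k)
    (μ : ℝ) (hμ : 0 < μ) (x : V → ℝ) (hx : ∀ v, 0 < x v)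
    (heig : ∀ v, ∑ u ∈ G.neighborFinset v, x u = μ * x v) :
    ∀ w : PowerVert G k s,
      ∑ e ∈ Finset.univ.filter (fun e : G.edgeSet => w ∈ powerEdge G k s e),
          ∏ t ∈ (powerEdge G k s e).erase w, powerVec G k s μ x t
        = μ ^ ((2 * (s : ℝ)) / k) * (powerVec G k s μ x w) ^ (k - 1) := by
  have hk0 : 0 < k := by omega
  have hkR : (0:ℝ) < k := by exact_mod_cast hk0
  have hcast : ((k - 1 : ℕ) : ℝ) = (k : ℝ) - 1 := by
    rw [Nat.cast_sub (by omega)]; norm_num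
  intro w
  cases w with
  | inl p =>
    obtain ⟨v, i⟩ := p
    have hfil : ∀ w : PowerVert G k s, w = Sum.inl (v,i) → (Finset.univ.filter (fun e : G.edgeSet =>
        w ∈ powerEdge G k s e))
        = Finset.univ.filter (fun e : G.edgeSet => v ∈ (e : Sym2 V)) := by
      intro w hw
      ext e; simp only [Finset.mem_filter, Finset.mem_univ, true_and]
      rw [mem_powerEdge, hw]; exact Iff.rfl
    rw [hfil _ rfl]
    have hterm : ∀ e ∈ Finset.univ.filter (fun e : G.edgeSet => v ∈ (e : Sym2 V)),
        ∏ t ∈ (powerEdge G k s e).erase (Sum.inl (v,i)), powerVec G k s μ x t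
        = (x v ^ ((2:ℝ)/k))⁻¹ * (μ ^ ((2*(s:ℝ) - k)/k)
            * Sym2.lift ⟨fun a b => x a * x b, fun a b => mul_comm _ _⟩ (e : Sym2 V)) := by
      intro e he
      have hw : (Sum.inl (v,i) : PowerVert G k s) ∈ powerEdge G k s e := by
        refine (mem_powerEdge G k s e _).2 ?_
        exact (Finset.mem_filter.1 he).2
      have hne0 : powerVec G k s μ x (Sum.inl (v,i) : PowerVert G k s) ≠ 0 :=
        (powerVec_pos G hμ hx _).ne'
      have hfull := Finset.mul_prod_erase _ (powerVec G k s μ x) hw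
      rw [prod_powerEdge G k s hs2 hk0 hμ hx e] at hfull
      rw [← hfull]
      rw [show powerVec G k s μ x (Sum.inl (v,i) : PowerVert G k s)
            = x v ^ ((2:ℝ)/k) from rfl]
      rw [inv_mul_cancel_left₀ (by positivity)]
    rw [Finset.sum_congr rfl hterm, ← Finset.mul_sum, ← Finset.mul_sum,
      sum_incident G x v, ← Finset.mul_sum, heig v]
    rw [show powerVec G k s μ x (Sum.inl (v,i) : PowerVert G k s)
          = x v ^ ((2:ℝ)/k) from rfl]
    have hv := hx v
    rw [← Real.rpow_natCast (x v ^ ((2:ℝ)/k)) (k-1), ← Real.rpow_mul hv.le,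
      ← Real.rpow_neg hv.le]
    rw [show ∀ a b c m : ℝ, a * (m * (b * (μ * c))) = (m * μ) * (b * c * a) from
      fun a b c m => by ring]
    rw [← Real.rpow_add_one hμ.ne']
    have hx2 : x v * x v = x v ^ ((2:ℝ)) := by
      rw [show (2:ℝ) = ((2:ℕ):ℝ) by norm_num, Real.rpow_natCast]; ring
    rw [hx2, ← Real.rpow_add hv, hcast]
    rw [show (2*(s:ℝ) - k)/k + 1 = 2*(s:ℝ)/k from by field_simp; ring,
      show (2:ℝ) + -((2:ℝ)/k) = (2:ℝ)/k * ((k:ℝ) - 1) from by field_simp; ring]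
  | inr q =>
    obtain ⟨e0, j⟩ := q
    have hfil : ∀ w : PowerVert G k s, w = Sum.inr (e0,j) → (Finset.univ.filter (fun e : G.edgeSet =>
        w ∈ powerEdge G k s e)) = {e0} := by
      intro w hw
      ext e
      simp only [Finset.mem_filter, Finset.mem_univ, true_and,
        Sum.elim_inr, Finset.mem_singleton]
      rw [mem_powerEdge, hw]
      exact eq_comm
    rw [hfil _ rfl, Finset.sum_singleton]
    have hw : (Sum.inr (e0,j) : PowerVert G k s) ∈ powerEdge G k s e0 := by
      exact (mem_powerEdge G k s e0 _).2 rfl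
    have hL : 0 < Sym2.lift ⟨fun a b => x a * x b, fun a b => mul_comm _ _⟩
        (e0 : Sym2 V) := lift_pos hx _
    have hfull := Finset.mul_prod_erase _ (powerVec G k s μ x) hw
    rw [prod_powerEdge G k s hs2 hk0 hμ hx e0] at hfull
    set L := Sym2.lift ⟨fun a b => x a * x b, fun a b => mul_comm _ _⟩
        (e0 : Sym2 V) with hLdef
    have hB : (0:ℝ) < μ⁻¹ * L := by positivity
    have herase : ∏ t ∈ (powerEdge G k s e0).erase (Sum.inr (e0,j)), powerVec G k s μ x t
        = (powerVec G k s μ x (Sum.inr (e0,j) : PowerVert G k s))⁻¹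
          * (μ ^ ((2*(s:ℝ) - k)/k) * L) := by
      rw [← hfull]; exact (inv_mul_cancel_left₀ (powerVec_pos G hμ hx _).ne' _).symm
    rw [herase]
    rw [show powerVec G k s μ x (Sum.inr (e0,j) : PowerVert G k s)
          = (μ⁻¹ * L) ^ ((1:ℝ)/k) from rfl]
    rw [show μ ^ ((2*(s:ℝ) - k)/k) * L = (μ ^ ((2*(s:ℝ) - k)/k) * μ) * (μ⁻¹ * L) from
      by field_simp]
    rw [← Real.rpow_natCast ((μ⁻¹ * L) ^ ((1:ℝ)/k)) (k-1), ← Real.rpow_mul hB.le,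
      ← Real.rpow_neg hB.le]
    rw [show ∀ m : ℝ, (μ⁻¹*L) ^ (-((1:ℝ)/k)) * (m * (μ⁻¹*L))
          = m * ((μ⁻¹*L) * (μ⁻¹*L) ^ (-((1:ℝ)/k))) from fun m => by ring]
    rw [show (μ⁻¹*L) * (μ⁻¹*L) ^ (-((1:ℝ)/k)) = (μ⁻¹*L) ^ ((1:ℝ) + -((1:ℝ)/k)) from
      by rw [Real.rpow_add hB, Real.rpow_one]]
    rw [← Real.rpow_add_one hμ.ne', hcast]
    rw [show (2*(s:ℝ) - k)/k + 1 = 2*(s:ℝ)/k from by field_simp; ring,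
      show (1:ℝ) + -((1:ℝ)/k) = (1:ℝ)/k * ((k:ℝ) - 1) from by field_simp; ring]
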